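/- Let a and n be integers with n ≥ 2, 1 ≤ a < n and gcd(a,n) = 1. Then V(a,n) = 1 if and only if a = n − 1, and V(a,n) = n − 1 if and only if a = 1. -/

import Mathlib

/-- `(x, y) ∈ ℤ²` lies in the interior of the lattice parallelogram
`P_{a,n} = {t₁·(1,0) + t₂·(a,n) : 0 ≤ t₁, t₂ ≤ 1}`. -/
def inInteriorP (a n : ℤ) (p : ℤ × ℤ) : Prop :=
  ∃ t₁ t₂ : ℝ, 0 < t₁ ∧ t₁ < 1 ∧ 0 < t₂ ∧ t₂ < 1 ∧
    (p.1 : ℝ) = t₁ + t₂ * (a : ℝ) ∧ (p.2 : ℝ) = t₂ * (n : ℝ)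

/-- A lattice point `(x, y) ∈ ℤ²` is visible (from the origin) if `gcd(x, y) = 1`. -/
def VisiblePt (p : ℤ × ℤ) : Prop := Int.gcd p.1 p.2 = 1

/-- `V a n` is the number of visible lattice points in the interior of `P_{a,n}`. -/
noncomputable def V (a n : ℤ) : ℕ :=
  {p : ℤ × ℤ | inInteriorP a n p ∧ VisiblePt p}.ncard

lemma interior_iff (a n : ℤ) (hn : 0 < n) (p : ℤ × ℤ) :
    inInteriorP a n p ↔ 0 < p.2 ∧ p.2 < n ∧ a * p.2 < n * p.1 ∧ n * p.1 < a * p.2 + n := by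
  have hn' : (0:ℝ) < (n:ℝ) := by exact_mod_cast hn
  constructor
  · rintro ⟨t₁, t₂, h1, h2, h3, h4, hx, hy⟩
    have e1 : ((n:ℤ) * p.1 : ℤ) = ((n * p.1 : ℤ) : ℤ) := rfl
    have key : ((n * p.1 : ℤ) : ℝ) = n * t₁ + (a:ℝ) * (p.2 : ℝ) := by
      push_cast; rw [hx, hy]; ring
    refine ⟨?_, ?_, ?_, ?_⟩
    · have : (0:ℝ) < (p.2:ℝ) := by rw [hy]; positivity
      exact_mod_cast this
    · have : (p.2:ℝ) < n := by rw [hy]; nlinarith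
      exact_mod_cast this
    · have : ((a * p.2 : ℤ) : ℝ) < ((n * p.1 : ℤ) : ℝ) := by
        rw [key]; push_cast; nlinarith
      exact_mod_cast this
    · have : ((n * p.1 : ℤ) : ℝ) < ((a * p.2 + n : ℤ) : ℝ) := by
        rw [key]; push_cast; nlinarith
      exact_mod_cast this
  · rintro ⟨h1, h2, h3, h4⟩
    refine ⟨((n:ℝ) * p.1 - a * p.2) / n, (p.2 : ℝ) / n, ?_, ?_, ?_, ?_, ?_, ?_⟩
    · apply div_pos _ hn'
      have : ((a * p.2 : ℤ) : ℝ) < ((n * p.1 : ℤ) : ℝ) := by exact_mod_cast h3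
      push_cast at this; linarith
    · rw [div_lt_one hn']
      have : ((n * p.1 : ℤ) : ℝ) < ((a * p.2 + n : ℤ) : ℝ) := by exact_mod_cast h4
      push_cast at this; linarith
    · apply div_pos _ hn'; exact_mod_cast h1
    · rw [div_lt_one hn']; exact_mod_cast h2
    · field_simp; ring
    · field_simp

lemma ndvd (a n y : ℤ) (hgcd : Int.gcd a n = 1) (hy1 : 0 < y) (hy2 : y < n) :
    ¬ (n ∣ a * y) := by
  intro h
  have hc : IsCoprime n a := (Int.isCoprime_iff_gcd_eq_one.mpr hgcd).symm
  have : n ∣ y := hc.dvd_of_dvd_mul_left h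
  have := Int.le_of_dvd hy1 this
  omega

lemma x_eq (a n x y : ℤ) (hn : 0 < n) (h1 : a*y < n*x) (h2 : n*x < a*y + n) :
    x = a*y/n + 1 := by
  have l1 : a*y/n < x := by rw [Int.ediv_lt_iff_lt_mul hn]; linarith [h1]
  have l2 : x - 1 ≤ a*y/n := by
    rw [Int.le_ediv_iff_mul_le hn]; nlinarith [h2]
  omega

lemma interior_x (a n y : ℤ) (hn : 0 < n) (hgcd : Int.gcd a n = 1)
    (hy1 : 0 < y) (hy2 : y < n) :
    a*y < n*(a*y/n + 1) ∧ n*(a*y/n + 1) < a*y + n := by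
  constructor
  · have := Int.lt_ediv_add_one_mul_self (a*y) hn
    nlinarith [this]
  · have hle := Int.ediv_mul_le (a*y) (show n ≠ 0 by omega)
    have hne : a*y/n * n ≠ a*y := by
      intro h
      exact ndvd a n y hgcd hy1 hy2 ⟨a*y/n, by linarith [h]⟩
    have : a*y/n * n < a*y := lt_of_le_of_ne hle hne
    nlinarith

noncomputable def T (a n : ℤ) : Finset ℤ :=
  (Finset.Icc 1 (n-1)).filter fun y => Int.gcd (a*y/n + 1) y = 1

lemma V_eq_card (a n : ℤ) (hn : 2 ≤ n) (hgcd : Int.gcd a n = 1) :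
    V a n = (T a n).card := by
  have hn0 : (0:ℤ) < n := by omega
  have hset : {p : ℤ × ℤ | inInteriorP a n p ∧ VisiblePt p}
      = ↑((T a n).image fun y => (a*y/n + 1, y)) := by
    ext ⟨x, y⟩
    simp only [Set.mem_setOf_eq, Finset.coe_image, Set.mem_image, Finset.mem_coe,
      T, Finset.mem_filter, Finset.mem_Icc, interior_iff a n hn0, VisiblePt]
    constructor
    · rintro ⟨⟨h1, h2, h3, h4⟩, hv⟩
      have hx : x = a*y/n + 1 := x_eq a n x y hn0 h3 h4
      exact ⟨y, ⟨⟨by omega, by omega⟩, by rw [← hx]; exact hv⟩, by rw [hx]⟩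
    · rintro ⟨y', ⟨⟨hy1, hy2⟩, hg⟩, heq⟩
      have hxy : x = a*y'/n + 1 ∧ y = y' := by
        constructor
        · exact (congrArg Prod.fst heq).symm
        · exact (congrArg Prod.snd heq).symm
      obtain ⟨hx, hy⟩ := hxy
      subst hy
      have := interior_x a n y hn0 hgcd (by omega) (by omega)
      exact ⟨⟨by omega, by omega, by rw [hx]; exact this.1, by rw [hx]; exact this.2⟩,
        by rw [hx]; exact hg⟩
  rw [V, hset, Set.ncard_coe_finset]
  apply Finset.card_image_of_injOn
  intro y1 _ y2 _ h
  simpa using congrArg Prod.snd h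

lemma T_a_one (n : ℤ) (hn : 2 ≤ n) : T 1 n = Finset.Icc 1 (n-1) := by
  rw [T, Finset.filter_true_of_mem]
  intro y hy
  rw [Finset.mem_Icc] at hy
  have : (1:ℤ)*y/n = 0 := Int.ediv_eq_zero_of_lt (by omega) (by omega)
  rw [this]
  simp

lemma T_a_top (n : ℤ) (hn : 2 ≤ n) : T (n-1) n = {1} := by
  ext y
  simp only [T, Finset.mem_filter, Finset.mem_Icc, Finset.mem_singleton]
  constructor
  · rintro ⟨⟨h1, h2⟩, hg⟩
    have hrw : (n-1)*y = (n - y) + (y-1)*n := by ring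
    rw [hrw, Int.add_mul_ediv_right _ _ (show n ≠ 0 by omega),
      Int.ediv_eq_zero_of_lt (by omega) (by omega)] at hg
    have : (0 + (y-1)) + 1 = y := by ring
    rw [this, Int.gcd_self] at hg
    omega
  · rintro rfl
    refine ⟨⟨le_refl 1, by omega⟩, ?_⟩
    have : (n-1)*1/n = 0 := Int.ediv_eq_zero_of_lt (by omega) (by omega)
    rw [this]
    simp

lemma two_le_card (a n : ℤ) (hn : 2 ≤ n) (ha : 1 ≤ a) (han : a < n)
    (hgcd : Int.gcd a n = 1) (hne : a ≠ n - 1) : 2 ≤ (T a n).card := by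
  have hn0 : (0:ℤ) < n := by omega
  -- 1 ∈ T
  have h1 : (1:ℤ) ∈ T a n := by
    simp only [T, Finset.mem_filter, Finset.mem_Icc]
    refine ⟨⟨le_refl 1, by omega⟩, ?_⟩
    have : a*1/n = 0 := Int.ediv_eq_zero_of_lt (by omega) (by omega)
    rw [this]; simp
  -- y₀ with a*y₀ ≡ -1 mod n
  obtain ⟨u, v, huv⟩ := Int.isCoprime_iff_gcd_eq_one.mpr hgcd
  set y₀ := (-u) % n with hy₀def
  have hy0nn : 0 ≤ y₀ := Int.emod_nonneg _ (by omega)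
  have hy0lt : y₀ < n := Int.emod_lt_of_pos _ hn0
  have hdvd : a * y₀ + 1 = n * (v - a * ((-u)/n)) := by
    rw [hy₀def, Int.emod_def]
    linear_combination -huv
  have hy0ne0 : y₀ ≠ 0 := by
    intro h
    rw [h] at hdvd
    have : n ∣ 1 := ⟨v - a * ((-u)/n), by linarith⟩
    have := Int.le_of_dvd one_pos this
    omega
  have hy0mem : y₀ ∈ T a n := by
    simp only [T, Finset.mem_filter, Finset.mem_Icc]
    refine ⟨⟨by omega, by omega⟩, ?_⟩
    set k := v - a * ((-u)/n) with hk
    have hay : a*y₀ = (n-1) + (k-1)*n := by linarith [hdvd]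
    have hdiv : a*y₀/n = k - 1 := by
      rw [hay, Int.add_mul_ediv_right _ _ (show n ≠ 0 by omega),
        Int.ediv_eq_zero_of_lt (by omega) (by omega)]
      ring
    rw [hdiv]
    have hx0 : k - 1 + 1 = k := by ring
    rw [hx0]
    have hd1 : (Int.gcd k y₀ : ℤ) ∣ k := Int.gcd_dvd_left k y₀
    have hd2 : (Int.gcd k y₀ : ℤ) ∣ y₀ := Int.gcd_dvd_right k y₀
    have : (Int.gcd k y₀ : ℤ) ∣ 1 := by
      have : (1:ℤ) = n * k - a * y₀ := by linarith [hdvd]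
      rw [this]
      exact dvd_sub (Dvd.dvd.mul_left hd1 n) (Dvd.dvd.mul_left hd2 a)
    have := Int.eq_one_of_dvd_one (by positivity) this
    exact_mod_cast this
  have hy0ne1 : y₀ ≠ 1 := by
    intro h
    rw [h] at hdvd
    have hdd : n ∣ a + 1 := ⟨v - a * ((-u)/n), by linarith⟩
    have := Int.le_of_dvd (by omega) hdd
    omega
  calc 2 = ({1, y₀} : Finset ℤ).card := (Finset.card_pair (Ne.symm hy0ne1)).symm
    _ ≤ (T a n).card := Finset.card_le_card (by
        intro z hz
        simp only [Finset.mem_insert, Finset.mem_singleton] at hz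
        rcases hz with rfl | rfl
        · exact h1
        · exact hy0mem)

lemma card_le_of_two_le (a n : ℤ) (hn : 2 ≤ n) (ha2 : 2 ≤ a) (han : a < n)
    (hgcd : Int.gcd a n = 1) : (T a n).card + 1 ≤ (n-1).toNat := by
  have hn0 : (0:ℤ) < n := by omega
  have h2a : (0:ℤ) < 2*a := by omega
  set y' := n/(2*a) + 1 with hy'
  have hy'pos : 1 ≤ y' := by
    have : 0 ≤ n/(2*a) := Int.ediv_nonneg (by omega) (by omega)
    omega
  have hlt : n < y' * (2*a) := Int.lt_ediv_add_one_mul_self n h2a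
  have hane : 2*a ≠ n := by
    intro h
    have hd : a ∣ n := ⟨2, by omega⟩
    have : (a:ℤ) ∣ (Int.gcd a n : ℤ) := Int.dvd_coe_gcd dvd_rfl hd
    rw [hgcd] at this
    have := Int.le_of_dvd one_pos this
    omega
  have hub : y' * (2*a) < 2*n := by
    rcases lt_or_gt_of_ne hane with h | h
    · have := Int.ediv_mul_le n (show 2*a ≠ 0 by omega)
      have : y' * (2*a) = n/(2*a)*(2*a) + 2*a := by rw [hy']; ring
      omega
    · have h0 : n/(2*a) = 0 := Int.ediv_eq_zero_of_lt (by omega) h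
      have : y' * (2*a) = 2*a := by rw [hy', h0]; ring
      omega
  set ys := 2 * y' with hys
  have hays : a * ys = y' * (2*a) := by rw [hys]; ring
  have hyslt : ys < n := by nlinarith
  have hdivs : a*ys/n = 1 := by
    have hrw : a*ys = (a*ys - n) + 1*n := by ring
    rw [hrw, Int.add_mul_ediv_right _ _ (show n ≠ 0 by omega),
      Int.ediv_eq_zero_of_lt (by omega) (by omega)]
    norm_num
  have hysnot : ys ∉ T a n := by
    simp only [T, Finset.mem_filter, Finset.mem_Icc]
    rintro ⟨-, hg⟩
    rw [hdivs] at hg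
    norm_num at hg
    have h2d : (2:ℤ) ∣ (Int.gcd 2 ys : ℤ) := Int.dvd_coe_gcd dvd_rfl ⟨y', hys⟩
    rw [hg] at h2d
    norm_num at h2d
  have hsub : T a n ⊆ (Finset.Icc 1 (n-1)).erase ys := by
    rw [Finset.subset_erase]
    exact ⟨Finset.filter_subset _ _, hysnot⟩
  have hmem : ys ∈ Finset.Icc 1 (n-1) := by
    rw [Finset.mem_Icc]; omega
  have := Finset.card_le_card hsub
  rw [Finset.card_erase_of_mem hmem, Int.card_Icc] at this
  have hcard_pos : 1 ≤ (n - 1 + 1 - 1).toNat := by omega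
  omega

/-- `V(a,n) = 1` iff `a = n − 1`, and `V(a,n) = n − 1` iff `a = 1`. -/
theorem V_eq_one_iff_and_V_eq_n_sub_one_iff (a n : ℤ) (hn : 2 ≤ n)
    (ha : 1 ≤ a) (han : a < n) (hgcd : Int.gcd a n = 1) :
    ((V a n : ℤ) = 1 ↔ a = n - 1) ∧ ((V a n : ℤ) = n - 1 ↔ a = 1) := by
  have hV : V a n = (T a n).card := V_eq_card a n hn hgcd
  constructor
  · constructor
    · intro h
      by_contra hne
      have := two_le_card a n hn ha han hgcd hne
      rw [hV] at h
      omega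
    · rintro rfl
      rw [hV, T_a_top n hn]
      simp
  · constructor
    · intro h
      by_contra hne
      have ha2 : 2 ≤ a := by omega
      have := card_le_of_two_le a n hn ha2 han hgcd
      rw [hV] at h
      have hnn : ((n-1).toNat : ℤ) = n - 1 := by omega
      omega
    · rintro rfl
      rw [hV, T_a_one n hn, Int.card_Icc]
      omega
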